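/- Let g : ℝ × ℤ × ℤ → Mat(m×m, ℂ) be invertible and entrywise differentiable in t. Then g satisfies (g_t g^{-1})_{,1} − g_t g^{-1} = g_{,2} g_{,1}^{-1} − (g_{,2} g_{,1}^{-1})_{,-2} if and only if h := g^{-1} satisfies the semi-discrete chiral model equation (h h_{,1}^{-1})_t + (h h_{,2}^{-1})_{,1,-2} − h h_{,2}^{-1} = 0. -/

import Mathlib

open Matrix


namespace Stmt3Aux

attribute [local instance] Matrix.linftyOpNormedRing Matrix.linftyOpNormedAlgebra

variable {m : ℕ}

noncomputable def entryCLM (a b : Fin m) : Matrix (Fin m) (Fin m) ℂ →L[ℝ] ℂ :=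
  LinearMap.toContinuousLinearMap
    { toFun := fun A => A a b
      map_add' := fun _ _ => rfl
      map_smul' := fun _ _ => rfl }

theorem hasDerivAt_entry {f : ℝ → Matrix (Fin m) (Fin m) ℂ} {f' : Matrix (Fin m) (Fin m) ℂ}
    {t : ℝ} (h : HasDerivAt f f' t) (a b : Fin m) :
    HasDerivAt (fun s => f s a b) (f' a b) t :=
  (entryCLM a b).hasFDerivAt.comp_hasDerivAt t h

theorem hasDerivAt_matrix {f : ℝ → Matrix (Fin m) (Fin m) ℂ} {f' : Matrix (Fin m) (Fin m) ℂ}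
    {t : ℝ} (h : ∀ a b, HasDerivAt (fun s => f s a b) (f' a b) t) :
    HasDerivAt f f' t := by
  have e1 : f = fun s => ∑ a : Fin m, ∑ b : Fin m, (f s a b) • Matrix.single a b (1 : ℂ) := by
    funext s
    conv_lhs => rw [matrix_eq_sum_single (f s)]
    simp [Matrix.smul_single]
  have e2 : f' = ∑ a : Fin m, ∑ b : Fin m, (f' a b) • Matrix.single a b (1 : ℂ) := by
    conv_lhs => rw [matrix_eq_sum_single f']
    simp [Matrix.smul_single]
  rw [e1, e2]
  exact HasDerivAt.fun_sum fun a _ => HasDerivAt.fun_sum fun b _ => (h a b).smul_const _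

theorem hasDerivAt_inv {f : ℝ → Matrix (Fin m) (Fin m) ℂ} {f' : Matrix (Fin m) (Fin m) ℂ}
    {t : ℝ} (h : HasDerivAt f f' t) (hu : IsUnit (f t)) :
    HasDerivAt (fun s => (f s)⁻¹) (-((f t)⁻¹ * f' * (f t)⁻¹)) t := by
  obtain ⟨u, hu⟩ := hu
  have h2 := HasFDerivAt.comp_hasDerivAt t (hu ▸ hasFDerivAt_ringInverse (𝕜 := ℝ) u) h
  have e1 : (Ring.inverse ∘ f) = fun s => (f s)⁻¹ := by
    funext s; exact (Matrix.nonsing_inv_eq_ringInverse _).symm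
  rw [e1] at h2
  refine HasDerivAt.congr_deriv h2 ?_
  simp [ContinuousLinearMap.mulLeftRight_apply, coe_units_inv, hu, Matrix.mul_assoc]

theorem algebra_iff (A B C E T T₁ : Matrix (Fin m) (Fin m) ℂ)
    (hA : IsUnit A.det) (hB : IsUnit B.det) (hE : IsUnit E.det) :
    (T₁ * B⁻¹ - T * A⁻¹ = C * B⁻¹ - A * E⁻¹)
      ↔ (-(A⁻¹ * T * A⁻¹) * B + A⁻¹ * T₁ = A⁻¹ * C - E⁻¹ * B) := by
  constructor
  · intro h
    have h2 := congrArg (fun X => A⁻¹ * X * B) h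
    simp only [Matrix.mul_sub, Matrix.sub_mul, Matrix.mul_assoc,
      Matrix.nonsing_inv_mul B hB, Matrix.nonsing_inv_mul_cancel_left A _ hA,
      Matrix.mul_one] at h2
    rw [neg_mul, neg_add_eq_sub]
    simpa [Matrix.mul_assoc] using h2
  · intro h
    have h2 := congrArg (fun X => A * X * B⁻¹) h
    simp only [Matrix.mul_sub, Matrix.mul_add, Matrix.sub_mul, Matrix.add_mul, Matrix.mul_assoc,
      Matrix.mul_nonsing_inv B hB, Matrix.mul_nonsing_inv_cancel_left A _ hA,
      Matrix.nonsing_inv_mul_cancel_left, Matrix.mul_one, Matrix.mul_neg, Matrix.neg_mul] at h2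
    rw [← neg_add_eq_sub, ← h2]

end Stmt3Aux

attribute [local instance] Matrix.linftyOpNormedRing Matrix.linftyOpNormedAlgebra


open Stmt3Aux in
/-- an invertible, entrywise `t`-differentiable `g : ℝ × ℤ × ℤ → Mat(m×m,ℂ)`
satisfies `(g_t g⁻¹)_{,1} − g_t g⁻¹ = g_{,2} g_{,1}⁻¹ − (g_{,2} g_{,1}⁻¹)_{,-2}` if and only if
`h := g⁻¹` satisfies the semi-discrete chiral model equation
`(h h_{,1}⁻¹)_t + (h h_{,2}⁻¹)_{,1,-2} − h h_{,2}⁻¹ = 0`. -/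
theorem stmt_3 (m : ℕ) (g gt : ℝ → ℤ → ℤ → Matrix (Fin m) (Fin m) ℂ)
    (hginv : ∀ t j₁ j₂, IsUnit (g t j₁ j₂))
    (hgt : ∀ t j₁ j₂ (a b : Fin m), HasDerivAt (fun s => g s j₁ j₂ a b) (gt t j₁ j₂ a b) t) :
    (∀ t j₁ j₂,
        gt t (j₁ + 1) j₂ * (g t (j₁ + 1) j₂)⁻¹ - gt t j₁ j₂ * (g t j₁ j₂)⁻¹
          = g t j₁ (j₂ + 1) * (g t (j₁ + 1) j₂)⁻¹ - g t j₁ j₂ * (g t (j₁ + 1) (j₂ - 1))⁻¹)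
    ↔ (∀ t j₁ j₂ (a b : Fin m),
        HasDerivAt (fun s => ((g s j₁ j₂)⁻¹ * ((g s (j₁ + 1) j₂)⁻¹)⁻¹) a b)
          (((g t j₁ j₂)⁻¹ * ((g t j₁ (j₂ + 1))⁻¹)⁻¹
            - (g t (j₁ + 1) (j₂ - 1))⁻¹ * ((g t (j₁ + 1) j₂)⁻¹)⁻¹) a b) t) := by
  have hdet : ∀ t j₁ j₂, IsUnit (g t j₁ j₂).det := fun t j₁ j₂ =>
    (Matrix.isUnit_iff_isUnit_det _).mp (hginv t j₁ j₂)
  have hgm : ∀ t j₁ j₂, HasDerivAt (fun s => g s j₁ j₂) (gt t j₁ j₂) t := fun t j₁ j₂ =>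
    hasDerivAt_matrix fun a b => hgt t j₁ j₂ a b
  have hfun : ∀ j₁ j₂ : ℤ, (fun s => (g s j₁ j₂)⁻¹ * ((g s (j₁ + 1) j₂)⁻¹)⁻¹)
      = fun s => (g s j₁ j₂)⁻¹ * g s (j₁ + 1) j₂ := by
    intro j₁ j₂; funext s
    rw [Matrix.nonsing_inv_nonsing_inv _ (hdet s (j₁ + 1) j₂)]
  have hval : ∀ (t : ℝ) (j₁ j₂ : ℤ), ((g t j₁ j₂)⁻¹ * ((g t j₁ (j₂ + 1))⁻¹)⁻¹
      - (g t (j₁ + 1) (j₂ - 1))⁻¹ * ((g t (j₁ + 1) j₂)⁻¹)⁻¹)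
      = (g t j₁ j₂)⁻¹ * g t j₁ (j₂ + 1) - (g t (j₁ + 1) (j₂ - 1))⁻¹ * g t (j₁ + 1) j₂ := by
    intro t j₁ j₂
    rw [Matrix.nonsing_inv_nonsing_inv _ (hdet t j₁ (j₂ + 1)),
        Matrix.nonsing_inv_nonsing_inv _ (hdet t (j₁ + 1) j₂)]
  have hD : ∀ (t : ℝ) (j₁ j₂ : ℤ), HasDerivAt (fun s => (g s j₁ j₂)⁻¹ * g s (j₁ + 1) j₂)
      (-((g t j₁ j₂)⁻¹ * gt t j₁ j₂ * (g t j₁ j₂)⁻¹) * g t (j₁ + 1) j₂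
        + (g t j₁ j₂)⁻¹ * gt t (j₁ + 1) j₂) t := fun t j₁ j₂ =>
    (hasDerivAt_inv (hgm t j₁ j₂) (hginv t j₁ j₂)).mul (hgm t (j₁ + 1) j₂)
  constructor
  · intro H t j₁ j₂ a b
    have key := (algebra_iff (g t j₁ j₂) (g t (j₁ + 1) j₂) (g t j₁ (j₂ + 1))
        (g t (j₁ + 1) (j₂ - 1)) (gt t j₁ j₂) (gt t (j₁ + 1) j₂)
        (hdet t j₁ j₂) (hdet t (j₁ + 1) j₂) (hdet t (j₁ + 1) (j₂ - 1))).mp (H t j₁ j₂)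
    have h := hD t j₁ j₂
    rw [← hfun j₁ j₂, key] at h
    rw [hval t j₁ j₂]
    exact hasDerivAt_entry h a b
  · intro H t j₁ j₂
    have h1 : HasDerivAt (fun s => (g s j₁ j₂)⁻¹ * g s (j₁ + 1) j₂)
        ((g t j₁ j₂)⁻¹ * g t j₁ (j₂ + 1) - (g t (j₁ + 1) (j₂ - 1))⁻¹ * g t (j₁ + 1) j₂) t := by
      have h0 := hasDerivAt_matrix fun a b => H t j₁ j₂ a b
      rw [hfun j₁ j₂, hval t j₁ j₂] at h0
      exact h0
    have h2 := (hD t j₁ j₂).unique h1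
    exact (algebra_iff (g t j₁ j₂) (g t (j₁ + 1) j₂) (g t j₁ (j₂ + 1))
        (g t (j₁ + 1) (j₂ - 1)) (gt t j₁ j₂) (gt t (j₁ + 1) j₂)
        (hdet t j₁ j₂) (hdet t (j₁ + 1) j₂) (hdet t (j₁ + 1) (j₂ - 1))).mpr h2
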